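/- For every real number c ≥ 1 there exists a bounded invertible operator W with bounded inverse on the product Hilbert space K := H × H such that: (i) W preserves the indefinite inner product, i.e. {W u, W v} = {u, v} for all u, v ∈ K (W is J-unitary); (ii) r(W) = r(W⁻¹) = c; and (iii) S(W,c) = S(W⁻¹,c) = S((W*)⁻¹,c) = S(W*,c) = {0}. -/

import Mathlib

noncomputable section

/-- `Hsp` is the complex Hilbert space `ℓ²(ℤ)` of square-summable bilateral
complex sequences. -/
abbrev Hsp : Type := lp (fun _ : ℤ => ℂ) 2

/-- `K` is the product Hilbert space `H × H`. -/
abbrev K : Type := WithLp 2 (Hsp × Hsp)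

/-- The indefinite inner ℂ product `{(x,y),(x',y')} := ⟨x,y'⟩ + ⟨y,x'⟩` on `K = H × H`. -/
def indef (p q : K) : ℂ :=
  (inner ℂ (WithLp.equiv 2 (Hsp × Hsp) p).1 (WithLp.equiv 2 (Hsp × Hsp) q).2 : ℂ) +
  (inner ℂ (WithLp.equiv 2 (Hsp × Hsp) p).2 (WithLp.equiv 2 (Hsp × Hsp) q).1 : ℂ)

/-- `S T a` is the set of vectors `x` such that `‖T^N x‖ ≤ M·a^N` for all `N ≥ 0`,
for some constant `M ≥ 0`. -/
def S {X : Type*} [NormedAddCommGroup X] [NormedSpace ℂ X] (T : X →L[ℂ] X) (a : ℝ) : Set X :=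
  {x | ∃ M : ℝ, 0 ≤ M ∧ ∀ N : ℕ, ‖(T ^ N) x‖ ≤ M * a ^ N}

namespace St18
open Finset

variable (c : ℝ)

def lam : ℝ := Real.log c

def bb : ℕ → ℕ
  | 0 => 0
  | (j+1) => bb j + (j+1) * ((2*⌈lam c⌉₊ + 2) * bb j + j + 2)

lemma bb_succ_ge (j : ℕ) : bb c j + (j + 2) ≤ bb c (j+1) := by
  show bb c j + (j+2) ≤ bb c j + (j+1) * ((2*⌈lam c⌉₊ + 2) * bb c j + j + 2)
  have : j + 2 ≤ (j+1) * ((2*⌈lam c⌉₊ + 2) * bb c j + j + 2) := by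
    calc j + 2 ≤ (2*⌈lam c⌉₊ + 2) * bb c j + j + 2 := by omega
    _ ≤ (j+1) * ((2*⌈lam c⌉₊ + 2) * bb c j + j + 2) := Nat.le_mul_of_pos_left _ (by omega)
  omega

lemma bb_mono : Monotone (bb c) :=
  monotone_nat_of_le_succ (fun j => by have := bb_succ_ge c j; omega)

lemma lt_bb_succ (m : ℕ) : m < bb c (m+1) := by
  induction m with
  | zero => have := bb_succ_ge c 0; omega
  | succ k ih => have h1 := bb_succ_ge c (k+1); have h2 := bb_mono c (Nat.le_succ k); omega

lemma exists_bb (m : ℕ) : ∃ j, m < bb c (j+1) := ⟨m, lt_bb_succ c m⟩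

def KK (m : ℕ) : ℕ := Nat.find (exists_bb c m)

lemma KK_spec (m : ℕ) : m < bb c (KK c m + 1) := Nat.find_spec (exists_bb c m)

lemma KK_lower (m : ℕ) : bb c (KK c m) ≤ m := by
  rcases Nat.eq_zero_or_pos (KK c m) with h | h
  · rw [h]; exact Nat.zero_le m
  · have h2 := Nat.find_min (exists_bb c m)
      (show KK c m - 1 < KK c m from Nat.sub_lt h one_pos)
    have h3 : bb c (KK c m - 1 + 1) ≤ m := le_of_not_gt h2
    rwa [show KK c m - 1 + 1 = KK c m by omega] at h3

lemma KK_ge {j m : ℕ} (h : bb c j ≤ m) : j ≤ KK c m := by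
  by_contra hlt
  push_neg at hlt
  have : bb c (KK c m + 1) ≤ bb c j := bb_mono c (by omega)
  have := KK_spec c m
  omega

lemma KK_eq {j m : ℕ} (h1 : bb c j ≤ m) (h2 : m < bb c (j+1)) : KK c m = j :=
  le_antisymm (Nat.find_min' _ h2) (KK_ge c h1)

def del (m : ℕ) : ℝ := (-1)^(KK c m) * (lam c + 1/(KK c m + 1))

variable {c}
variable (hc : 1 ≤ c)
include hc

lemma lam_nonneg : 0 ≤ lam c := Real.log_nonneg hc

lemma abs_del (m : ℕ) : |del c m| ≤ lam c + 1 := by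
  have h0 : (0:ℝ) < (KK c m : ℝ) + 1 := by positivity
  have h3 : (0:ℝ) ≤ (KK c m : ℝ) := Nat.cast_nonneg _
  have h1 : (1:ℝ)/((KK c m : ℝ)+1) ≤ 1 := by
    rw [div_le_one h0]; linarith
  have h2 : (0:ℝ) ≤ 1/((KK c m : ℝ)+1) := by positivity
  have := lam_nonneg hc
  rw [del, abs_mul, abs_pow, abs_neg, abs_one, one_pow, one_mul,
    abs_of_nonneg (by linarith : (0:ℝ) ≤ lam c + 1/((KK c m:ℝ)+1))]
  push_cast
  linarith

lemma del_block {j m : ℕ} (h1 : bb c j ≤ m) (h2 : m < bb c (j+1)) :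
    del c m = (-1)^j * (lam c + 1/(j+1)) := by
  rw [del, KK_eq c h1 h2]

variable (c)
def psi (t : ℕ) : ℝ := ∑ m ∈ range t, del c m
variable {c}

lemma abs_psi (t : ℕ) : |psi c t| ≤ (lam c + 1) * t := by
  calc |psi c t| ≤ ∑ m ∈ range t, |del c m| := Finset.abs_sum_le_sum_abs _ _
  _ ≤ ∑ _m ∈ range t, (lam c + 1) := Finset.sum_le_sum (fun m _ => abs_del hc m)
  _ = (lam c + 1) * t := by rw [Finset.sum_const, card_range, nsmul_eq_mul, mul_comm]

lemma psi_block (j : ℕ) :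
    psi c (bb c (j+1)) =
      psi c (bb c j) + (-1:ℝ)^j * (lam c + 1/(j+1)) * ((bb c (j+1) : ℝ) - bb c j) := by
  have hmono : bb c j ≤ bb c (j+1) := bb_mono c (Nat.le_succ j)
  have : psi c (bb c (j+1)) - psi c (bb c j)
      = ∑ m ∈ Finset.Ico (bb c j) (bb c (j+1)), del c m := by
    rw [psi, psi, ← Finset.sum_Ico_eq_sub _ hmono]
  have hconst : ∑ m ∈ Finset.Ico (bb c j) (bb c (j+1)), del c m
      = ((bb c (j+1) - bb c j : ℕ) : ℝ) * ((-1:ℝ)^j * (lam c + 1/(j+1))) := by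
    have h1 : ∀ m ∈ Finset.Ico (bb c j) (bb c (j+1)),
        del c m = (-1:ℝ)^j * (lam c + 1/(j+1)) :=
      fun m hm => del_block hc (Finset.mem_Ico.mp hm).1 (Finset.mem_Ico.mp hm).2
    rw [Finset.sum_congr rfl h1, Finset.sum_const, Nat.card_Ico, nsmul_eq_mul]
  rw [hconst] at this
  have hcast : ((bb c (j+1) - bb c j : ℕ) : ℝ) = (bb c (j+1) : ℝ) - bb c j := by
    push_cast [Nat.cast_sub hmono]; ring
  rw [hcast] at this
  linarith

variable (c) in
def Mr (j : ℕ) : ℕ := (2*⌈lam c⌉₊ + 2) * bb c j + j + 2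

omit hc in
lemma bb_succ_eq (j : ℕ) : bb c (j+1) = bb c j + (j+1) * Mr c j := rfl

omit hc in
lemma bb_cast_eq (j : ℕ) : (bb c (j+1) : ℝ) = (bb c j : ℝ) + ((j:ℝ)+1) * (Mr c j : ℝ) := by
  rw [bb_succ_eq]; push_cast; ring

lemma Mr_ge (j : ℕ) : (2*lam c + 1) * bb c j + j + 2 ≤ (Mr c j : ℝ) := by
  have h1 : lam c ≤ (⌈lam c⌉₊ : ℝ) := Nat.le_ceil _
  have h2 : (0:ℝ) ≤ (bb c j : ℝ) := Nat.cast_nonneg _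
  have : (Mr c j : ℝ) = (2*(⌈lam c⌉₊:ℝ) + 2) * bb c j + j + 2 := by
    rw [Mr]; push_cast; ring
  rw [this]
  nlinarith

lemma psi_block' (j : ℕ) :
    psi c (bb c (j+1)) = psi c (bb c j)
      + (-1:ℝ)^j * (lam c * (((j:ℝ)+1) * Mr c j) + Mr c j) := by
  have hj1 : ((j:ℝ)+1) ≠ 0 := by positivity
  have hL : (bb c (j+1) : ℝ) - (bb c j : ℝ) = ((j:ℝ)+1) * Mr c j := by
    rw [bb_cast_eq]; ring
  have hmul : (lam c + 1/((j:ℝ)+1)) * (((j:ℝ)+1) * Mr c j)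
      = lam c * (((j:ℝ)+1) * Mr c j) + Mr c j := by
    field_simp
  rw [psi_block hc j, hL, mul_assoc, hmul]

lemma psi_peak {j : ℕ} (hj : Even j) :
    lam c * (bb c (j+1) : ℝ) + j ≤ psi c (bb c (j+1)) := by
  have hb := psi_block' hc j
  rw [hj.neg_one_pow, one_mul] at hb
  have e4 : -((lam c + 1) * (bb c j : ℝ)) ≤ psi c (bb c j) := by
    have := abs_psi hc (bb c j); rw [abs_le] at this; linarith [this.1]
  have e5 := Mr_ge hc j
  rw [bb_cast_eq]
  nlinarith [(Nat.cast_nonneg (Mr c j) : (0:ℝ) ≤ (Mr c j : ℝ))]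

lemma psi_trough {j : ℕ} (hj : Odd j) :
    psi c (bb c (j+1)) ≤ -(lam c * (bb c (j+1) : ℝ)) - j := by
  have hb := psi_block' hc j
  rw [hj.neg_one_pow] at hb
  have e4 : psi c (bb c j) ≤ (lam c + 1) * (bb c j : ℝ) := by
    have := abs_psi hc (bb c j); rw [abs_le] at this; linarith [this.2]
  have e5 := Mr_ge hc j
  rw [bb_cast_eq]
  nlinarith [(Nat.cast_nonneg (Mr c j) : (0:ℝ) ≤ (Mr c j : ℝ))]

variable (c)
def phi (n : ℤ) : ℝ := psi c n.natAbs
variable {c}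

omit hc
lemma phi_neg (n : ℤ) : phi c (-n) = phi c n := by rw [phi, phi, Int.natAbs_neg]

lemma phi_natCast (t : ℕ) : phi c (t : ℤ) = psi c t := by rw [phi, Int.natAbs_natCast]

lemma phi_step_nonneg {n : ℤ} (h : 0 ≤ n) :
    phi c (n+1) - phi c n = del c n.toNat := by
  have h1 : (n+1).natAbs = n.toNat + 1 := by omega
  have h2 : n.natAbs = n.toNat := by omega
  rw [phi, phi, h1, h2, psi, psi, Finset.sum_range_succ]
  ring

lemma phi_step_neg {n : ℤ} (h : n < 0) :
    phi c (n+1) - phi c n = - del c (-(n+1)).toNat := by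
  have h1 : (n+1).natAbs = (-(n+1)).toNat := by omega
  have h2 : n.natAbs = (-(n+1)).toNat + 1 := by omega
  rw [phi, phi, h1, h2, psi, psi, Finset.sum_range_succ]
  ring
include hc

lemma abs_del_eq (m : ℕ) : |del c m| = lam c + 1/((KK c m : ℝ)+1) := by
  have h0 : (0:ℝ) < (KK c m : ℝ) + 1 := by positivity
  have := lam_nonneg hc
  rw [del, abs_mul, abs_pow, abs_neg, abs_one, one_pow, one_mul,
    abs_of_nonneg (by positivity : (0:ℝ) ≤ lam c + 1/((KK c m:ℝ)+1))]

lemma abs_del_le_far {j m : ℕ} (h : bb c j ≤ m) : |del c m| ≤ lam c + 1/((j:ℝ)+1) := by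
  rw [abs_del_eq hc]
  have h1 : (j:ℝ) ≤ (KK c m : ℝ) := by exact_mod_cast KK_ge c h
  have : (1:ℝ)/((KK c m : ℝ)+1) ≤ 1/((j:ℝ)+1) :=
    one_div_le_one_div_of_le (by positivity) (by linarith)
  linarith

lemma abs_phi_step (n : ℤ) : |phi c (n+1) - phi c n| ≤ lam c + 1 := by
  rcases le_or_gt 0 n with h | h
  · rw [phi_step_nonneg h]; exact abs_del hc _
  · rw [phi_step_neg h, abs_neg]; exact abs_del hc _

lemma abs_phi_step_far {j : ℕ} {n : ℤ} (h : (bb c j : ℤ) ≤ n ∨ n + 1 ≤ -(bb c j : ℤ)) :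
    |phi c (n+1) - phi c n| ≤ lam c + 1/((j:ℝ)+1) := by
  rcases le_or_gt 0 n with h0 | h0
  · rw [phi_step_nonneg h0]
    rcases h with h | h
    · exact abs_del_le_far hc (by omega)
    · exfalso; have : (0:ℤ) ≤ bb c j := Int.ofNat_nonneg _; omega
  · rw [phi_step_neg h0, abs_neg]
    rcases h with h | h
    · exfalso; have : (0:ℤ) ≤ bb c j := Int.ofNat_nonneg _; omega
    · exact abs_del_le_far hc (by omega)

omit hc in
lemma tele (f : ℤ → ℝ) (n : ℤ) (N : ℕ) :
    f (n + N) - f n = ∑ i ∈ Finset.range N, (f (n + i + 1) - f (n + i)) := by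
  induction N with
  | zero => simp
  | succ k ih =>
      rw [Finset.sum_range_succ, ← ih,
        show (n + ((k:ℕ)+1:ℕ) : ℤ) = n + (k:ℕ) + 1 by push_cast; ring]
      ring

lemma phi_window (j : ℕ) (n : ℤ) (N : ℕ) :
    |phi c (n + N) - phi c n|
      ≤ lam c * N + N/((j:ℝ)+1) + 2*(lam c + 1)*(bb c j : ℝ) := by
  have hlam := lam_nonneg hc
  have hbd : ∀ i ∈ Finset.range N, |phi c (n + i + 1) - phi c (n + i)|
      ≤ (lam c + 1/((j:ℝ)+1))
        + (if -(bb c j : ℤ) ≤ n + i ∧ n + i < (bb c j : ℤ) then lam c + 1 else 0) := by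
    intro i _
    by_cases hP : -(bb c j : ℤ) ≤ n + i ∧ n + i < (bb c j : ℤ)
    · rw [if_pos hP]
      have := abs_phi_step hc (n := n + i)
      have h1 : (0:ℝ) ≤ 1/((j:ℝ)+1) := by positivity
      linarith
    · rw [if_neg hP, add_zero]
      push_neg at hP
      apply abs_phi_step_far hc
      rcases le_or_gt (-(bb c j : ℤ)) (n + i) with h | h
      · left; exact hP h
      · right; omega
  have htel := tele (phi c) n N
  calc |phi c (n + N) - phi c n|
      = |∑ i ∈ Finset.range N, (phi c (n + i + 1) - phi c (n + i))| := by rw [htel]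
    _ ≤ ∑ i ∈ Finset.range N, |phi c (n + i + 1) - phi c (n + i)| :=
        Finset.abs_sum_le_sum_abs _ _
    _ ≤ ∑ i ∈ Finset.range N, ((lam c + 1/((j:ℝ)+1))
        + (if -(bb c j : ℤ) ≤ n + i ∧ n + i < (bb c j : ℤ) then lam c + 1 else 0)) :=
        Finset.sum_le_sum hbd
    _ = N * (lam c + 1/((j:ℝ)+1))
        + ∑ i ∈ Finset.range N,
            (if -(bb c j : ℤ) ≤ n + i ∧ n + i < (bb c j : ℤ) then lam c + 1 else 0) := by
        rw [Finset.sum_add_distrib, Finset.sum_const, Finset.card_range, nsmul_eq_mul]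
    _ ≤ N * (lam c + 1/((j:ℝ)+1)) + (lam c + 1) * (2 * (bb c j : ℝ)) := by
        have hcard : ((Finset.range N).filter
            (fun i : ℕ => -(bb c j : ℤ) ≤ n + (i:ℤ) ∧ n + (i:ℤ) < (bb c j : ℤ))).card ≤ 2 * bb c j := by
          have hsub : ∀ i ∈ (Finset.range N).filter
              (fun i : ℕ => -(bb c j : ℤ) ≤ n + (i:ℤ) ∧ n + (i:ℤ) < (bb c j : ℤ)),
              n + (i:ℤ) ∈ Finset.Ico (-(bb c j : ℤ)) (bb c j : ℤ) := by
            intro i hi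
            rw [Finset.mem_filter] at hi
            exact Finset.mem_Ico.mpr hi.2
          have hinj : Set.InjOn (fun i : ℕ => n + (i:ℤ))
              ((Finset.range N).filter
                (fun i : ℕ => -(bb c j : ℤ) ≤ n + (i:ℤ) ∧ n + (i:ℤ) < (bb c j : ℤ))) :=
            fun a _ b _ h => by simpa using h
          have hle := Finset.card_le_card_of_injOn _ hsub hinj
          rwa [Int.card_Ico,
            show ((bb c j : ℤ) - -(bb c j:ℤ)).toNat = 2 * bb c j by omega] at hle
        rw [← Finset.sum_filter, Finset.sum_const, nsmul_eq_mul]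
        have h1 : (0:ℝ) ≤ lam c + 1 := by linarith [lam_nonneg hc]
        have h2 : ((((Finset.range N).filter
            (fun i : ℕ => -(bb c j : ℤ) ≤ n + (i:ℤ) ∧ n + (i:ℤ) < (bb c j : ℤ))).card : ℝ))
            ≤ 2 * (bb c j:ℝ) := by exact_mod_cast hcard
        have h3 := mul_le_mul_of_nonneg_right h2 h1
        linarith
    _ = lam c * N + N/((j:ℝ)+1) + 2*(lam c + 1)*(bb c j : ℝ) := by ring

omit hc in
lemma phi_zero : phi c 0 = 0 := by
  rw [phi]; simp [psi]

lemma phi_fup (n : ℤ) (r : ℝ) : ∃ N : ℕ, r + N * lam c < phi c (n + N) - phi c n := by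
  set X := r - lam c * n + phi c n with hX
  set j := 2*(⌈|X|⌉₊ + n.natAbs + 1) with hj
  have hjX : X < (j : ℝ) := by
    have h1 : |X| ≤ (⌈|X|⌉₊ : ℝ) := Nat.le_ceil _
    have h2 : (⌈|X|⌉₊ : ℝ) + 1 ≤ (j : ℝ) := by
      rw [hj]; push_cast; have : (0:ℝ) ≤ (n.natAbs : ℝ) := Nat.cast_nonneg _; linarith
    have h3 : X ≤ |X| := le_abs_self X
    linarith
  have hjn : n ≤ (bb c (j+1) : ℤ) := by
    have h1 : n ≤ (n.natAbs : ℤ) := Int.le_natAbs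
    have h2 : n.natAbs ≤ j := by omega
    have h3 : j < bb c (j+1) := lt_bb_succ c j
    omega
  refine ⟨(bb c (j+1) - n).toNat, ?_⟩
  have hN : (((bb c (j+1) - n).toNat : ℤ)) = (bb c (j+1) : ℤ) - n :=
    Int.toNat_of_nonneg (by omega)
  have hNr : (((bb c (j+1) - n).toNat : ℕ) : ℝ) = (bb c (j+1) : ℝ) - (n : ℝ) := by
    exact_mod_cast congrArg (Int.cast : ℤ → ℝ) hN
  have harg : n + ((bb c (j+1) - n).toNat : ℤ) = ((bb c (j+1) : ℕ) : ℤ) := by omega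
  rw [harg, phi_natCast]
  have hpeak : lam c * (bb c (j+1) : ℝ) + j ≤ psi c (bb c (j+1)) :=
    psi_peak hc (by exact ⟨⌈|X|⌉₊ + n.natAbs + 1, by omega⟩)
  rw [hNr]
  nlinarith [lam_nonneg hc]

lemma phi_fdn (n : ℤ) (r : ℝ) : ∃ N : ℕ, r + N * lam c < phi c n - phi c (n + N) := by
  set X := r - lam c * n - phi c n with hX
  set j := 2*(⌈|X|⌉₊ + n.natAbs + 1) + 1 with hj
  have hjX : X < (j : ℝ) := by
    have h1 : |X| ≤ (⌈|X|⌉₊ : ℝ) := Nat.le_ceil _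
    have h2 : (⌈|X|⌉₊ : ℝ) + 1 ≤ (j : ℝ) := by
      rw [hj]; push_cast; have : (0:ℝ) ≤ (n.natAbs : ℝ) := Nat.cast_nonneg _; linarith
    have h3 : X ≤ |X| := le_abs_self X
    linarith
  have hjn : n ≤ (bb c (j+1) : ℤ) := by
    have h1 : n ≤ (n.natAbs : ℤ) := Int.le_natAbs
    have h2 : n.natAbs ≤ j := by omega
    have h3 : j < bb c (j+1) := lt_bb_succ c j
    omega
  refine ⟨(bb c (j+1) - n).toNat, ?_⟩
  have hN : (((bb c (j+1) - n).toNat : ℤ)) = (bb c (j+1) : ℤ) - n :=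
    Int.toNat_of_nonneg (by omega)
  have hNr : (((bb c (j+1) - n).toNat : ℕ) : ℝ) = (bb c (j+1) : ℝ) - (n : ℝ) := by
    exact_mod_cast congrArg (Int.cast : ℤ → ℝ) hN
  have harg : n + ((bb c (j+1) - n).toNat : ℤ) = ((bb c (j+1) : ℕ) : ℤ) := by omega
  rw [harg, phi_natCast]
  have htr : psi c (bb c (j+1)) ≤ -(lam c * (bb c (j+1) : ℝ)) - j :=
    psi_trough hc (by exact ⟨⌈|X|⌉₊ + n.natAbs + 1, by omega⟩)
  rw [hNr]
  nlinarith [lam_nonneg hc]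

lemma phi_bup (n : ℤ) (r : ℝ) : ∃ N : ℕ, r + N * lam c < phi c (n - N) - phi c n := by
  obtain ⟨N, hN⟩ := phi_fup hc (-n) r
  exact ⟨N, by rwa [show -n + (N:ℤ) = -(n - N) by ring, phi_neg, phi_neg] at hN⟩

lemma phi_bdn (n : ℤ) (r : ℝ) : ∃ N : ℕ, r + N * lam c < phi c n - phi c (n - N) := by
  obtain ⟨N, hN⟩ := phi_fdn hc (-n) r
  exact ⟨N, by rwa [show -n + (N:ℤ) = -(n - N) by ring, phi_neg, phi_neg] at hN⟩

lemma phi_diff_bound (n d : ℤ) : |phi c (n + d) - phi c n| ≤ (lam c + 1) * |(d:ℝ)| := by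
  rcases le_or_gt 0 d with h | h
  · have H := phi_window hc 0 n d.toNat
    rw [show ((d.toNat : ℕ) : ℤ) = d by omega] at H
    have habs : ((d.toNat : ℕ) : ℝ) = |(d:ℝ)| := by
      rw [abs_of_nonneg (show (0:ℝ) ≤ (d:ℝ) by exact_mod_cast h)]
      exact_mod_cast Int.toNat_of_nonneg h
    rw [habs, show bb c 0 = 0 from rfl] at H
    push_cast at H
    linarith
  · have H := phi_window hc 0 (n + d) (-d).toNat
    rw [show (((-d).toNat : ℕ) : ℤ) = -d by omega, show n + d + -d = n by ring] at H
    have habs : (((-d).toNat : ℕ) : ℝ) = |(d:ℝ)| := by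
      rw [abs_of_neg (show (d:ℝ) < 0 by exact_mod_cast h)]
      exact_mod_cast Int.toNat_of_nonneg (by omega : (0:ℤ) ≤ -d)
    rw [habs, abs_sub_comm, show bb c 0 = 0 from rfl] at H
    push_cast at H
    linarith

lemma phi_window_log {ε : ℝ} (hε : 0 < ε) :
    ∃ N₀ : ℕ, 1 ≤ N₀ ∧ ∀ N : ℕ, N₀ ≤ N → ∀ n : ℤ,
      |phi c (n + N) - phi c n| ≤ N * Real.log (c + ε) := by
  have hc0 : (0:ℝ) < c := by linarith
  have hlog : lam c < Real.log (c + ε) := Real.log_lt_log hc0 (by linarith)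
  set η := Real.log (c + ε) - lam c with hη
  have hη0 : 0 < η := by linarith
  set j := ⌈2/η⌉₊ with hj
  have hj1 : (1:ℝ)/((j:ℝ)+1) ≤ η/2 := by
    rw [div_le_div_iff₀ (by positivity) (by norm_num)]
    have h1 : 2/η ≤ (j:ℝ) := Nat.le_ceil _
    have h2 : 2/η * η = 2 := by field_simp
    nlinarith
  set N₀ := max 1 ⌈(2*(lam c+1)*(bb c j : ℝ))/(η/2)⌉₊ with hN₀
  refine ⟨N₀, le_max_left _ _, ?_⟩
  intro N hN n
  have hNb : 2*(lam c+1)*(bb c j : ℝ) ≤ (N:ℝ) * (η/2) := by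
    have h1 : (2*(lam c+1)*(bb c j : ℝ))/(η/2) ≤ (⌈(2*(lam c+1)*(bb c j : ℝ))/(η/2)⌉₊ : ℝ) :=
      Nat.le_ceil _
    have h2 : (⌈(2*(lam c+1)*(bb c j : ℝ))/(η/2)⌉₊ : ℝ) ≤ (N:ℝ) := by
      have : ⌈(2*(lam c+1)*(bb c j : ℝ))/(η/2)⌉₊ ≤ N := le_trans (le_max_right _ _) hN
      exact_mod_cast this
    have h3 : (2*(lam c+1)*(bb c j : ℝ))/(η/2) * (η/2) = 2*(lam c+1)*(bb c j : ℝ) := by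
      field_simp
    nlinarith [mul_le_mul_of_nonneg_right (h1.trans h2) (le_of_lt (by positivity : (0:ℝ) < η/2))]
  have hw := phi_window hc j n N
  have hjN : (N:ℝ)/((j:ℝ)+1) ≤ (N:ℝ) * (η/2) := by
    have h0 : (0:ℝ) ≤ (N:ℝ) := Nat.cast_nonneg _
    calc (N:ℝ)/((j:ℝ)+1) = (N:ℝ) * (1/((j:ℝ)+1)) := by ring
      _ ≤ (N:ℝ) * (η/2) := mul_le_mul_of_nonneg_left hj1 h0
  calc |phi c (n + N) - phi c n| ≤ lam c * N + N/((j:ℝ)+1) + 2*(lam c + 1)*(bb c j : ℝ) := hw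
    _ ≤ lam c * N + N * (η/2) + N * (η/2) := by linarith
    _ = N * Real.log (c + ε) := by rw [hη]; ring

omit hc

open scoped ComplexConjugate ENNReal NNReal

lemma two_toReal : (2:ℝ≥0∞).toReal = 2 := by norm_num

lemma rpow_two_toReal {r : ℝ} (hr : 0 ≤ r) : r ^ (2:ℝ≥0∞).toReal = r ^ (2:ℕ) := by
  rw [two_toReal, show (2:ℝ) = ((2:ℕ):ℝ) by norm_num, Real.rpow_natCast]

lemma summable_sq (x : Hsp) : Summable (fun n : ℤ => ‖x n‖ ^ (2:ℕ)) := by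
  have h := (memℓp_gen_iff (by norm_num : 0 < (2:ℝ≥0∞).toReal)).1 (lp.memℓp x)
  refine h.congr fun n => ?_
  rw [rpow_two_toReal (norm_nonneg _)]

lemma norm_sq_eq (x : Hsp) : ‖x‖ ^ (2:ℕ) = ∑' n, ‖x n‖ ^ (2:ℕ) := by
  have h := lp.norm_rpow_eq_tsum (p := 2) (by norm_num) x
  rw [rpow_two_toReal (norm_nonneg _)] at h
  rw [h]
  exact tsum_congr fun n => rpow_two_toReal (norm_nonneg _)

def opFun (w : ℤ → ℝ) (d : ℤ) (x : ℤ → ℂ) : ℤ → ℂ := fun n => (w n : ℂ) * x (n + d)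

lemma memℓp_opFun {w : ℤ → ℝ} {C : ℝ} (hw : ∀ n, |w n| ≤ C) (d : ℤ) (x : Hsp) :
    Memℓp (opFun w d x) 2 := by
  apply memℓp_gen
  have hsum : Summable (fun n : ℤ => C ^ (2:ℕ) * ‖x (n + d)‖ ^ (2:ℕ)) := by
    apply Summable.mul_left
    exact ((Equiv.addRight d).summable_iff (f := fun n : ℤ => ‖x n‖ ^ (2:ℕ))).2 (summable_sq x)
  have hle : ∀ n : ℤ, ‖opFun w d x n‖ ^ (2:ℝ≥0∞).toReal ≤ C ^ (2:ℕ) * ‖x (n + d)‖ ^ (2:ℕ) := by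
    intro n
    rw [rpow_two_toReal (norm_nonneg _)]
    have : ‖opFun w d x n‖ = |w n| * ‖x (n + d)‖ := by
      rw [opFun, norm_mul, Complex.norm_real, Real.norm_eq_abs]
    rw [this, mul_pow]
    have h1 : |w n| ^ (2:ℕ) ≤ C ^ (2:ℕ) := by
      have := hw n; have := abs_nonneg (w n); nlinarith
    have h2 : (0:ℝ) ≤ ‖x (n + d)‖ ^ (2:ℕ) := by positivity
    exact mul_le_mul_of_nonneg_right h1 h2
  exact Summable.of_nonneg_of_le (fun n => by positivity) hle hsum

def mkOp (w : ℤ → ℝ) (C : ℝ) (hw : ∀ n, |w n| ≤ C) (d : ℤ) : Hsp →L[ℂ] Hsp :=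
  LinearMap.mkContinuous
    { toFun := fun x => ⟨opFun w d x, memℓp_opFun hw d x⟩
      map_add' := fun x y => by
        apply lp.ext; funext n
        simp [opFun, mul_add]; rfl
      map_smul' := fun a x => by
        apply lp.ext; funext n
        simp [opFun]
        ring }
    C
    (by
      intro x
      have hC : 0 ≤ C := le_trans (abs_nonneg _) (hw 0)
      have hsq : ‖(⟨opFun w d x, memℓp_opFun hw d x⟩ : Hsp)‖ ^ (2:ℕ)
          ≤ (C * ‖x‖) ^ (2:ℕ) := by
        rw [norm_sq_eq]
        have h1 : ∀ n : ℤ, ‖(⟨opFun w d x, memℓp_opFun hw d x⟩ : Hsp) n‖ ^ (2:ℕ)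
            ≤ C ^ (2:ℕ) * ‖x (n+d)‖ ^ (2:ℕ) := by
          intro n
          have hco : ‖(⟨opFun w d x, memℓp_opFun hw d x⟩ : Hsp) n‖
              = |w n| * ‖x (n + d)‖ := by
            show ‖opFun w d x n‖ = _
            rw [opFun, norm_mul, Complex.norm_real, Real.norm_eq_abs]
          rw [hco, mul_pow]
          have ha := hw n; have hb := abs_nonneg (w n)
          have h2 : (0:ℝ) ≤ ‖x (n + d)‖ ^ (2:ℕ) := by positivity
          have h1 : |w n| ^ (2:ℕ) ≤ C ^ (2:ℕ) := by nlinarith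
          exact mul_le_mul_of_nonneg_right h1 h2
        calc ∑' n, ‖(⟨opFun w d x, memℓp_opFun hw d x⟩ : Hsp) n‖ ^ (2:ℕ)
            ≤ ∑' n, C ^ (2:ℕ) * ‖x (n+d)‖ ^ (2:ℕ) := by
              apply Summable.tsum_le_tsum h1
              · exact (memℓp_gen_iff (by norm_num : 0 < (2:ℝ≥0∞).toReal)).1
                  (memℓp_opFun hw d x) |>.congr
                  (fun n => by rw [rpow_two_toReal (norm_nonneg _)])
              · exact Summable.mul_left _
                  (((Equiv.addRight d).summable_iff
                    (f := fun n : ℤ => ‖x n‖ ^ (2:ℕ))).2 (summable_sq x))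
          _ = C ^ (2:ℕ) * ∑' n, ‖x (n+d)‖ ^ (2:ℕ) := tsum_mul_left
          _ = C ^ (2:ℕ) * ∑' n, ‖x n‖ ^ (2:ℕ) := by
              congr 1
              exact (Equiv.addRight d).tsum_eq (f := fun n : ℤ => ‖x n‖ ^ (2:ℕ))
          _ = (C * ‖x‖) ^ (2:ℕ) := by rw [← norm_sq_eq]; ring
      have h3 : (0:ℝ) ≤ ‖(⟨opFun w d x, memℓp_opFun hw d x⟩ : Hsp)‖ := norm_nonneg _
      have h4 : (0:ℝ) ≤ C * ‖x‖ := mul_nonneg hC (norm_nonneg _)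
      show ‖(⟨opFun w d x, memℓp_opFun hw d x⟩ : Hsp)‖ ≤ C * ‖x‖
      nlinarith)

lemma mkOp_apply {w : ℤ → ℝ} {C : ℝ} (hw : ∀ n, |w n| ≤ C) (d : ℤ) (x : Hsp) (n : ℤ) :
    (mkOp w C hw d x) n = (w n : ℂ) * x (n + d) := rfl

lemma mkOp_eq {w : ℤ → ℝ} {C C' : ℝ} (hw : ∀ n, |w n| ≤ C) (hw' : ∀ n, |w n| ≤ C')
    (d : ℤ) : mkOp w C hw d = mkOp w C' hw' d :=
  ContinuousLinearMap.ext fun _ => rfl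

lemma mkOp_norm_le {w : ℤ → ℝ} {C : ℝ} (hw : ∀ n, |w n| ≤ C) (d : ℤ) :
    ‖mkOp w C hw d‖ ≤ C :=
  LinearMap.mkContinuous_norm_le _ (le_trans (abs_nonneg _) (hw 0)) _

lemma mkOp_apply_norm_le {w : ℤ → ℝ} {C : ℝ} (hw : ∀ n, |w n| ≤ C) (d : ℤ)
    {C' : ℝ} (hw' : ∀ n, |w n| ≤ C') (x : Hsp) :
    ‖mkOp w C hw d x‖ ≤ C' * ‖x‖ := by
  rw [mkOp_eq hw hw' d]
  exact le_trans ((mkOp w C' hw' d).le_opNorm x)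
    (mul_le_mul_of_nonneg_right (mkOp_norm_le hw' d) (norm_nonneg x))

lemma mkOp_coord {w : ℤ → ℝ} {C : ℝ} (hw : ∀ n, |w n| ≤ C) (d : ℤ) (x : Hsp) (n : ℤ) :
    |w n| * ‖x (n + d)‖ ≤ ‖mkOp w C hw d x‖ := by
  have h := lp.norm_apply_le_norm (by norm_num : (2:ℝ≥0∞) ≠ 0) (mkOp w C hw d x) n
  rwa [mkOp_apply, norm_mul, Complex.norm_real, Real.norm_eq_abs] at h

lemma mkOp_comp {w v u : ℤ → ℝ} {C D E : ℝ}
    (hw : ∀ n, |w n| ≤ C) (hv : ∀ n, |v n| ≤ D) (hu : ∀ n, |u n| ≤ E)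
    {d e f : ℤ} (hfu : ∀ n, u n = w n * v (n + d)) (hf : f = d + e) :
    mkOp w C hw d ∘L mkOp v D hv e = mkOp u E hu f := by
  refine ContinuousLinearMap.ext fun x => ?_
  apply lp.ext; funext n
  show (w n : ℂ) * ((v (n + d) : ℂ) * x (n + d + e)) = (u n : ℂ) * x (n + f)
  rw [hfu, hf, add_assoc]
  push_cast
  ring

variable (c) in
def GG (hc : 1 ≤ c) (d : ℤ) : Hsp →L[ℂ] Hsp :=
  mkOp (fun n => Real.exp (phi c n - phi c (n + d))) (Real.exp ((lam c + 1) * |(d:ℝ)|))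
    (fun n => by
      rw [Real.abs_exp, Real.exp_le_exp]
      calc phi c n - phi c (n + d) ≤ |phi c (n + d) - phi c n| := by
            rw [abs_sub_comm]; exact le_abs_self _
        _ ≤ (lam c + 1) * |(d:ℝ)| := phi_diff_bound hc n d) d

variable (c) in
def HH (hc : 1 ≤ c) (d : ℤ) : Hsp →L[ℂ] Hsp :=
  mkOp (fun n => Real.exp (phi c (n + d) - phi c n)) (Real.exp ((lam c + 1) * |(d:ℝ)|))
    (fun n => by
      rw [Real.abs_exp, Real.exp_le_exp]
      calc phi c (n + d) - phi c n ≤ |phi c (n + d) - phi c n| := le_abs_self _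
        _ ≤ (lam c + 1) * |(d:ℝ)| := phi_diff_bound hc n d) d

include hc

lemma GG_comp (d e : ℤ) : GG c hc d ∘L GG c hc e = GG c hc (d + e) := by
  apply mkOp_comp
  · intro n
    rw [← Real.exp_add]
    congr 1
    rw [add_assoc]
    ring
  · rfl

lemma HH_comp (d e : ℤ) : HH c hc d ∘L HH c hc e = HH c hc (d + e) := by
  apply mkOp_comp
  · intro n
    rw [← Real.exp_add]
    congr 1
    rw [add_assoc]
    ring
  · rfl

lemma GG_zero : GG c hc 0 = 1 := by
  refine ContinuousLinearMap.ext fun x => ?_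
  apply lp.ext; funext n
  show (Real.exp (phi c n - phi c (n + 0)) : ℂ) * x (n + 0) = x n
  rw [add_zero, sub_self, Real.exp_zero]
  push_cast
  ring

lemma HH_zero : HH c hc 0 = 1 := by
  refine ContinuousLinearMap.ext fun x => ?_
  apply lp.ext; funext n
  show (Real.exp (phi c (n + 0) - phi c n) : ℂ) * x (n + 0) = x n
  rw [add_zero, sub_self, Real.exp_zero]
  push_cast
  ring

lemma GG_pow (d : ℤ) (N : ℕ) : GG c hc d ^ N = GG c hc (N * d) := by
  induction N with
  | zero => rw [pow_zero, show ((0:ℕ):ℤ) * d = 0 by push_cast; ring, GG_zero hc]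
  | succ k ih =>
      rw [pow_succ, ih, ContinuousLinearMap.mul_def, GG_comp hc]
      congr 1
      push_cast
      ring

lemma HH_pow (d : ℤ) (N : ℕ) : HH c hc d ^ N = HH c hc (N * d) := by
  induction N with
  | zero => rw [pow_zero, show ((0:ℕ):ℤ) * d = 0 by push_cast; ring, HH_zero hc]
  | succ k ih =>
      rw [pow_succ, ih, ContinuousLinearMap.mul_def, HH_comp hc]
      congr 1
      push_cast
      ring

omit hc

lemma inner_mkOp_cancel {w v : ℤ → ℝ} {C D : ℝ}
    (hw : ∀ n, |w n| ≤ C) (hv : ∀ n, |v n| ≤ D) (d : ℤ)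
    (h : ∀ n, w n * v n = 1) (x y : Hsp) :
    (inner ℂ (mkOp w C hw d x) (mkOp v D hv d y) : ℂ) = inner ℂ x y := by
  rw [lp.inner_eq_tsum, lp.inner_eq_tsum]
  have hpt : ∀ n : ℤ, (inner ℂ ((mkOp w C hw d x) n) ((mkOp v D hv d y) n) : ℂ)
      = inner ℂ (x (n + d)) (y (n + d)) := by
    intro n
    rw [mkOp_apply, mkOp_apply, RCLike.inner_apply, RCLike.inner_apply]
    rw [map_mul, Complex.conj_ofReal]
    have : (v n : ℂ) * y (n+d) * ((w n : ℂ) * (starRingEnd ℂ) (x (n+d)))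
        = ((w n * v n : ℝ) : ℂ) * ((starRingEnd ℂ) (x (n+d)) * y (n+d)) := by
      push_cast; ring
    rw [this, h n]
    push_cast
    ring
  rw [tsum_congr hpt]
  exact (Equiv.addRight d).tsum_eq (f := fun n : ℤ => (inner ℂ (x n) (y n) : ℂ))

lemma inner_mkOp_adj {w v : ℤ → ℝ} {C D : ℝ}
    (hw : ∀ n, |w n| ≤ C) (hv : ∀ n, |v n| ≤ D) (d : ℤ) {e : ℤ} (he : e = -d)
    (hvw : ∀ m, v m = w (m - d)) (x z : Hsp) :
    (inner ℂ (mkOp w C hw d x) z : ℂ) = inner ℂ x (mkOp v D hv e z) := by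
  subst he
  rw [lp.inner_eq_tsum, lp.inner_eq_tsum]
  rw [← (Equiv.addRight d).tsum_eq
    (f := fun m : ℤ => (inner ℂ (x m) ((mkOp v D hv (-d) z) m) : ℂ))]
  apply tsum_congr
  intro n
  show (inner ℂ ((mkOp w C hw d x) n) (z n) : ℂ) = inner ℂ (x (n + d)) ((mkOp v D hv (-d) z) (n + d))
  rw [mkOp_apply, mkOp_apply, RCLike.inner_apply, RCLike.inner_apply, hvw,
    show n + d - d = n by ring, show n + d + -d = n by ring, map_mul, Complex.conj_ofReal]
  ring

section PartC

lemma le_of_sq_le_sq {a b : ℝ} (h : a^(2:ℕ) ≤ b^(2:ℕ)) (ha : 0 ≤ a) (hb : 0 ≤ b) :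
    a ≤ b := by nlinarith

def pairMap (P Q : Hsp →L[ℂ] Hsp) : K →L[ℂ] K :=
  ((WithLp.prodContinuousLinearEquiv 2 ℂ Hsp Hsp).symm.toContinuousLinearMap) ∘L
    ((P.prodMap Q) ∘L (WithLp.prodContinuousLinearEquiv 2 ℂ Hsp Hsp).toContinuousLinearMap)

lemma pairMap_fst (P Q : Hsp →L[ℂ] Hsp) (u : K) : (pairMap P Q u).fst = P u.fst := rfl
lemma pairMap_snd (P Q : Hsp →L[ℂ] Hsp) (u : K) : (pairMap P Q u).snd = Q u.snd := rfl

lemma pairMap_comp (P Q P' Q' : Hsp →L[ℂ] Hsp) :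
    pairMap P Q ∘L pairMap P' Q' = pairMap (P ∘L P') (Q ∘L Q') := rfl

lemma pairMap_one : pairMap 1 1 = (1 : K →L[ℂ] K) := rfl

lemma pairMap_pow (P Q : Hsp →L[ℂ] Hsp) (N : ℕ) :
    (pairMap P Q) ^ N = pairMap (P ^ N) (Q ^ N) := by
  induction N with
  | zero => rw [pow_zero, pow_zero, pow_zero, pairMap_one]
  | succ k ih =>
      rw [pow_succ, pow_succ, pow_succ, ih, ContinuousLinearMap.mul_def,
        ContinuousLinearMap.mul_def, ContinuousLinearMap.mul_def, pairMap_comp]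

lemma pairMap_norm_sq (P Q : Hsp →L[ℂ] Hsp) (u : K) :
    ‖pairMap P Q u‖ ^ (2:ℕ) = ‖P u.fst‖ ^ (2:ℕ) + ‖Q u.snd‖ ^ (2:ℕ) := by
  rw [WithLp.prod_norm_sq_eq_of_L2, pairMap_fst, pairMap_snd]

lemma norm_sq_K (u : K) : ‖u‖ ^ (2:ℕ) = ‖u.fst‖ ^ (2:ℕ) + ‖u.snd‖ ^ (2:ℕ) :=
  WithLp.prod_norm_sq_eq_of_L2 u

lemma pairMap_norm_le (P Q : Hsp →L[ℂ] Hsp) {B : ℝ} (hB : 0 ≤ B)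
    (hP : ∀ x, ‖P x‖ ≤ B * ‖x‖) (hQ : ∀ x, ‖Q x‖ ≤ B * ‖x‖) (u : K) :
    ‖pairMap P Q u‖ ≤ B * ‖u‖ := by
  have h1 := pairMap_norm_sq P Q u
  have h2 := norm_sq_K u
  have hPu := hP u.fst
  have hQu := hQ u.snd
  have k1 : (0:ℝ) ≤ ‖pairMap P Q u‖ := norm_nonneg _
  have k2 : (0:ℝ) ≤ B * ‖u‖ := mul_nonneg hB (norm_nonneg _)
  have k3 : (0:ℝ) ≤ ‖P u.fst‖ := norm_nonneg _
  have k4 : (0:ℝ) ≤ ‖Q u.snd‖ := norm_nonneg _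
  have k5 : (0:ℝ) ≤ ‖u.fst‖ := norm_nonneg _
  have k6 : (0:ℝ) ≤ ‖u.snd‖ := norm_nonneg _
  have p3 : B^(2:ℕ) * (‖u‖^(2:ℕ)) = B^(2:ℕ)*(‖u.fst‖^(2:ℕ)) + B^(2:ℕ)*(‖u.snd‖^(2:ℕ)) := by
    rw [h2]; ring
  have p1 : ‖P u.fst‖^(2:ℕ) ≤ B^(2:ℕ) * ‖u.fst‖^(2:ℕ) := by nlinarith
  have p2 : ‖Q u.snd‖^(2:ℕ) ≤ B^(2:ℕ) * ‖u.snd‖^(2:ℕ) := by nlinarith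
  have hsq : ‖pairMap P Q u‖^(2:ℕ) ≤ (B*‖u‖)^(2:ℕ) := by nlinarith [p1, p2, p3]
  exact le_of_sq_le_sq hsq k1 k2

lemma pairMap_norm_fst (P Q : Hsp →L[ℂ] Hsp) (u : K) :
    ‖P u.fst‖ ≤ ‖pairMap P Q u‖ := by
  have h1 := pairMap_norm_sq P Q u
  have k1 : (0:ℝ) ≤ ‖pairMap P Q u‖ := norm_nonneg _
  have k3 : (0:ℝ) ≤ ‖P u.fst‖ := norm_nonneg _
  have k4 : (0:ℝ) ≤ ‖Q u.snd‖ := norm_nonneg _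
  exact le_of_sq_le_sq (by nlinarith) k3 k1

lemma pairMap_norm_snd (P Q : Hsp →L[ℂ] Hsp) (u : K) :
    ‖Q u.snd‖ ≤ ‖pairMap P Q u‖ := by
  have h1 := pairMap_norm_sq P Q u
  have k1 : (0:ℝ) ≤ ‖pairMap P Q u‖ := norm_nonneg _
  have k3 : (0:ℝ) ≤ ‖P u.fst‖ := norm_nonneg _
  have k4 : (0:ℝ) ≤ ‖Q u.snd‖ := norm_nonneg _
  exact le_of_sq_le_sq (by nlinarith) k4 k1

lemma adjoint_pairMap (P Q P' Q' : Hsp →L[ℂ] Hsp)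
    (hP : ∀ x z, (inner ℂ (P' x) z : ℂ) = inner ℂ x (P z))
    (hQ : ∀ y z, (inner ℂ (Q' y) z : ℂ) = inner ℂ y (Q z)) :
    ContinuousLinearMap.adjoint (pairMap P Q) = pairMap P' Q' := by
  symm
  rw [ContinuousLinearMap.eq_adjoint_iff]
  intro u v
  rw [WithLp.prod_inner_apply, WithLp.prod_inner_apply]
  simp only [WithLp.ofLp_fst, WithLp.ofLp_snd]
  rw [pairMap_fst, pairMap_snd,
    pairMap_fst, pairMap_snd, hP, hQ]

end PartC

section PartD

variable (c) in
def Wop (hc : 1 ≤ c) : K →L[ℂ] K := pairMap (GG c hc (-1)) (HH c hc (-1))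

variable (c) in
def Winv (hc : 1 ≤ c) : K →L[ℂ] K := pairMap (GG c hc 1) (HH c hc 1)

include hc

lemma W_comp_Winv : Wop c hc ∘L Winv c hc = 1 := by
  rw [Wop, Winv, pairMap_comp, GG_comp hc, HH_comp hc,
    show (-1 + 1 : ℤ) = 0 by ring, GG_zero hc, HH_zero hc, pairMap_one]

lemma Winv_comp_W : Winv c hc ∘L Wop c hc = 1 := by
  rw [Wop, Winv, pairMap_comp, GG_comp hc, HH_comp hc,
    show (1 + -1 : ℤ) = 0 by ring, GG_zero hc, HH_zero hc, pairMap_one]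

lemma inner_GG_HH (x y : Hsp) :
    (inner ℂ (GG c hc (-1) x) (HH c hc (-1) y) : ℂ) = inner ℂ x y := by
  apply inner_mkOp_cancel
  intro n
  rw [← Real.exp_add, show phi c n - phi c (n + -1) + (phi c (n + -1) - phi c n) = 0 by ring,
    Real.exp_zero]

lemma inner_HH_GG (x y : Hsp) :
    (inner ℂ (HH c hc (-1) x) (GG c hc (-1) y) : ℂ) = inner ℂ x y := by
  apply inner_mkOp_cancel
  intro n
  rw [← Real.exp_add, show phi c (n + -1) - phi c n + (phi c n - phi c (n + -1)) = 0 by ring,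
    Real.exp_zero]

lemma I1 (x z : Hsp) : (inner ℂ (HH c hc 1 x) z : ℂ) = inner ℂ x (GG c hc (-1) z) := by
  apply inner_mkOp_adj (d := 1)
  · norm_num
  · intro m
    rw [show m + (-1:ℤ) = m - 1 by ring, show m - 1 + 1 = m by ring]

lemma I2 (y z : Hsp) : (inner ℂ (GG c hc 1 y) z : ℂ) = inner ℂ y (HH c hc (-1) z) := by
  apply inner_mkOp_adj (d := 1)
  · norm_num
  · intro m
    rw [show m + (-1:ℤ) = m - 1 by ring, show m - 1 + 1 = m by ring]

lemma I3 (x z : Hsp) : (inner ℂ (HH c hc (-1) x) z : ℂ) = inner ℂ x (GG c hc 1 z) := by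
  apply inner_mkOp_adj (d := -1)
  · norm_num
  · intro m
    rw [show m - (-1:ℤ) = m + 1 by ring, show m + 1 + -1 = m by ring]

lemma I4 (y z : Hsp) : (inner ℂ (GG c hc (-1) y) z : ℂ) = inner ℂ y (HH c hc 1 z) := by
  apply inner_mkOp_adj (d := -1)
  · norm_num
  · intro m
    rw [show m - (-1:ℤ) = m + 1 by ring, show m + 1 + -1 = m by ring]

lemma adjoint_W : ContinuousLinearMap.adjoint (Wop c hc) = pairMap (HH c hc 1) (GG c hc 1) :=
  adjoint_pairMap _ _ _ _ (I1 hc) (I2 hc)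

lemma adjoint_Winv :
    ContinuousLinearMap.adjoint (Winv c hc) = pairMap (HH c hc (-1)) (GG c hc (-1)) :=
  adjoint_pairMap _ _ _ _ (I3 hc) (I4 hc)

-- coordinate lower bounds for powers
lemma GG_pow_coord (d : ℤ) (N : ℕ) (x : Hsp) (m : ℤ) :
    Real.exp (phi c m - phi c (m + N * d)) * ‖x (m + N * d)‖ ≤ ‖(GG c hc d ^ N) x‖ := by
  rw [GG_pow hc d N]
  have h := mkOp_coord (C := Real.exp ((lam c + 1) * |((N * d : ℤ):ℝ)|))
    (w := fun n => Real.exp (phi c n - phi c (n + N * d)))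
    (fun n => by
      rw [Real.abs_exp, Real.exp_le_exp]
      calc phi c n - phi c (n + N * d) ≤ |phi c (n + N * d) - phi c n| := by
            rw [abs_sub_comm]; exact le_abs_self _
        _ ≤ (lam c + 1) * |((N * d : ℤ):ℝ)| := phi_diff_bound hc n (N * d))
    (N * d) x m
  rwa [Real.abs_exp] at h

lemma HH_pow_coord (d : ℤ) (N : ℕ) (x : Hsp) (m : ℤ) :
    Real.exp (phi c (m + N * d) - phi c m) * ‖x (m + N * d)‖ ≤ ‖(HH c hc d ^ N) x‖ := by
  rw [HH_pow hc d N]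
  have h := mkOp_coord (C := Real.exp ((lam c + 1) * |((N * d : ℤ):ℝ)|))
    (w := fun n => Real.exp (phi c (n + N * d) - phi c n))
    (fun n => by
      rw [Real.abs_exp, Real.exp_le_exp]
      calc phi c (n + N * d) - phi c n ≤ |phi c (n + N * d) - phi c n| := le_abs_self _
        _ ≤ (lam c + 1) * |((N * d : ℤ):ℝ)| := phi_diff_bound hc n (N * d))
    (N * d) x m
  rwa [Real.abs_exp] at h

-- upper bounds for powers
lemma phi_pm {N : ℕ} {B : ℝ} (hwin : ∀ n : ℤ, |phi c (n + (N:ℤ)) - phi c n| ≤ B)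
    (a b : ℤ) (hab : a = b + N ∨ b = a + N) : phi c a - phi c b ≤ B := by
  rcases hab with h | h
  · subst h
    exact le_trans (le_abs_self _) (hwin b)
  · subst h
    calc phi c a - phi c (a + N) ≤ |phi c (a + N) - phi c a| := by
          rw [abs_sub_comm]; exact le_abs_self _
      _ ≤ B := hwin a

lemma GG_pow_norm_le {N : ℕ} {B : ℝ} (hwin : ∀ n : ℤ, |phi c (n + (N:ℤ)) - phi c n| ≤ B)
    (d : ℤ) (hd : d = 1 ∨ d = -1) (x : Hsp) :
    ‖(GG c hc d ^ N) x‖ ≤ Real.exp B * ‖x‖ := by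
  rw [GG_pow hc d N]
  apply mkOp_apply_norm_le
  intro n
  rw [Real.abs_exp, Real.exp_le_exp]
  apply phi_pm hc hwin
  rcases hd with h | h
  · subst h; right; push_cast; ring
  · subst h; left; push_cast; ring

lemma HH_pow_norm_le {N : ℕ} {B : ℝ} (hwin : ∀ n : ℤ, |phi c (n + (N:ℤ)) - phi c n| ≤ B)
    (d : ℤ) (hd : d = 1 ∨ d = -1) (x : Hsp) :
    ‖(HH c hc d ^ N) x‖ ≤ Real.exp B * ‖x‖ := by
  rw [HH_pow hc d N]
  apply mkOp_apply_norm_le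
  intro n
  rw [Real.abs_exp, Real.exp_le_exp]
  apply phi_pm hc hwin
  rcases hd with h | h
  · subst h; left; push_cast; ring
  · subst h; right; push_cast; ring

lemma W_pow_norm_le {N : ℕ} {B : ℝ} (hwin : ∀ n : ℤ, |phi c (n + (N:ℤ)) - phi c n| ≤ B)
    (d : ℤ) (hd : d = 1 ∨ d = -1) :
    ‖pairMap (GG c hc d) (HH c hc d) ^ N‖ ≤ Real.exp B := by
  rw [pairMap_pow]
  apply ContinuousLinearMap.opNorm_le_bound _ (Real.exp_pos B).le
  intro u
  exact pairMap_norm_le _ _ (Real.exp_pos B).le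
    (GG_pow_norm_le hc hwin d hd) (HH_pow_norm_le hc hwin d hd) u

lemma spectral_upper (d : ℤ) (hd : d = 1 ∨ d = -1) {ε : ℝ} (hε : 0 < ε) :
    ∃ N₀ : ℕ, 1 ≤ N₀ ∧ ∀ N, N₀ ≤ N →
      ‖pairMap (GG c hc d) (HH c hc d) ^ N‖ ≤ (c + ε)^N := by
  obtain ⟨N₀, hN₀, hwin⟩ := phi_window_log hc hε
  refine ⟨N₀, hN₀, fun N hN => ?_⟩
  have h := W_pow_norm_le hc (B := N * Real.log (c + ε)) (hwin N hN) d hd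
  rwa [Real.exp_nat_mul, Real.exp_log (by linarith : (0:ℝ) < c + ε)] at h

omit hc in
lemma eq_one_of_sq {a : ℝ} (h : a^(2:ℕ) = 1) (ha : 0 ≤ a) : a = 1 :=
  le_antisymm (by nlinarith) (by nlinarith)

omit hc in
lemma norm_single_one (i : ℤ) : ‖(lp.single 2 i (1:ℂ) : Hsp)‖ = 1 := by
  have h := lp.norm_single (p := 2) (E := fun _ : ℤ => ℂ) (by norm_num) i (1:ℂ)
  simpa using h

omit hc in
lemma norm_symm_single_fst (x : Hsp) :
    ‖(WithLp.equiv 2 (Hsp × Hsp)).symm (x, (0:Hsp))‖ = ‖x‖ := by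
  have h := WithLp.prod_norm_sq_eq_of_L2 ((WithLp.equiv 2 (Hsp × Hsp)).symm (x, (0:Hsp)))
  have hf : ((WithLp.equiv 2 (Hsp × Hsp)).symm (x, (0:Hsp))).fst = x := rfl
  have hs : ((WithLp.equiv 2 (Hsp × Hsp)).symm (x, (0:Hsp))).snd = (0:Hsp) := rfl
  rw [hf, hs, norm_zero] at h
  have h1 : (0:ℝ) ≤ ‖(WithLp.equiv 2 (Hsp × Hsp)).symm (x, (0:Hsp))‖ := norm_nonneg _
  have h2 : (0:ℝ) ≤ ‖x‖ := norm_nonneg _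
  nlinarith

instance : Nontrivial K := by
  refine ⟨(WithLp.equiv 2 (Hsp × Hsp)).symm (lp.single 2 (0:ℤ) 1, 0), 0, fun h => ?_⟩
  have h1 := norm_symm_single_fst (lp.single 2 (0:ℤ) 1)
  rw [h, norm_zero, norm_single_one] at h1
  norm_num at h1


lemma W_lower (k : ℕ) :
    ∃ N : ℕ, k + 1 ≤ N ∧ (c:ℝ)^N ≤ ‖Wop c hc ^ N‖ := by
  have hc0 : (0:ℝ) < c := lt_of_lt_of_le one_pos hc
  set N := bb c (2*k+1) with hNdef
  have hkN : k + 1 ≤ N := by have := lt_bb_succ c (2*k); omega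
  refine ⟨N, hkN, ?_⟩
  have hψ : lam c * (N:ℝ) + (2*k:ℕ) ≤ psi c N := by
    have := psi_peak hc (j := 2*k) (even_two_mul k)
    exact_mod_cast this
  have hcN : (c:ℝ)^N ≤ Real.exp (psi c N) := by
    have h1 : (c:ℝ)^N = Real.exp ((N:ℝ) * lam c) := by
      rw [Real.exp_nat_mul, lam, Real.exp_log hc0]
    rw [h1, Real.exp_le_exp]
    have : (0:ℝ) ≤ ((2*k:ℕ):ℝ) := Nat.cast_nonneg _
    linarith
  set x : Hsp := lp.single 2 (0:ℤ) 1 with hxdef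
  set u : K := (WithLp.equiv 2 (Hsp × Hsp)).symm (x, 0) with hudef
  have hufst : u.fst = x := rfl
  have husnd : u.snd = (0 : Hsp) := rfl
  have hunorm : ‖u‖ = 1 := by
    refine eq_one_of_sq ?_ (norm_nonneg u)
    rw [norm_sq_K u, hufst, husnd, norm_zero, hxdef, norm_single_one]
    norm_num
  have hcoord := GG_pow_coord hc (-1) N x ((N:ℕ):ℤ)
  rw [show ((N:ℕ):ℤ) + (N:ℕ) * (-1 : ℤ) = 0 by ring] at hcoord
  rw [phi_natCast, phi_zero, sub_zero] at hcoord
  have hx0 : x 0 = 1 := lp.single_apply_self 2 (0:ℤ) 1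
  rw [hx0, norm_one, mul_one] at hcoord
  have hfst : ‖(GG c hc (-1) ^ N) x‖ ≤ ‖(Wop c hc ^ N) u‖ := by
    rw [Wop, pairMap_pow]
    exact le_trans (le_of_eq (by rw [hufst])) (pairMap_norm_fst _ _ u)
  have hop : ‖(Wop c hc ^ N) u‖ ≤ ‖Wop c hc ^ N‖ := by
    have := (Wop c hc ^ N).le_opNorm u
    rwa [hunorm, mul_one] at this
  linarith

lemma Winv_lower (k : ℕ) :
    ∃ N : ℕ, k + 1 ≤ N ∧ (c:ℝ)^N ≤ ‖Winv c hc ^ N‖ := by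
  have hc0 : (0:ℝ) < c := lt_of_lt_of_le one_pos hc
  set N := bb c (2*k+1) with hNdef
  have hkN : k + 1 ≤ N := by have := lt_bb_succ c (2*k); omega
  refine ⟨N, hkN, ?_⟩
  have hψ : lam c * (N:ℝ) + (2*k:ℕ) ≤ psi c N := by
    have := psi_peak hc (j := 2*k) (even_two_mul k)
    exact_mod_cast this
  have hcN : (c:ℝ)^N ≤ Real.exp (psi c N) := by
    have h1 : (c:ℝ)^N = Real.exp ((N:ℝ) * lam c) := by
      rw [Real.exp_nat_mul, lam, Real.exp_log hc0]
    rw [h1, Real.exp_le_exp]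
    have : (0:ℝ) ≤ ((2*k:ℕ):ℝ) := Nat.cast_nonneg _
    linarith
  set y : Hsp := lp.single 2 ((N:ℕ):ℤ) 1 with hydef
  set u : K := (WithLp.equiv 2 (Hsp × Hsp)).symm (0, y) with hudef
  have hufst : u.fst = (0 : Hsp) := rfl
  have husnd : u.snd = y := rfl
  have hunorm : ‖u‖ = 1 := by
    refine eq_one_of_sq ?_ (norm_nonneg u)
    rw [norm_sq_K u, hufst, husnd, norm_zero, hydef, norm_single_one]
    norm_num
  have hcoord := HH_pow_coord hc 1 N y (0:ℤ)
  rw [show (0:ℤ) + (N:ℕ) * (1 : ℤ) = ((N:ℕ):ℤ) by ring] at hcoord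
  rw [phi_natCast, phi_zero, sub_zero] at hcoord
  have hyN : y ((N:ℕ):ℤ) = 1 := lp.single_apply_self 2 _ 1
  rw [hyN, norm_one, mul_one] at hcoord
  have hsnd : ‖(HH c hc 1 ^ N) y‖ ≤ ‖(Winv c hc ^ N) u‖ := by
    rw [Winv, pairMap_pow]
    exact le_trans (le_of_eq (by rw [husnd])) (pairMap_norm_snd _ _ u)
  have hop : ‖(Winv c hc ^ N) u‖ ≤ ‖Winv c hc ^ N‖ := by
    have := (Winv c hc ^ N).le_opNorm u
    rwa [hunorm, mul_one] at this
  linarith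

lemma spectral_eq_of (T : K →L[ℂ] K)
    (hup : ∀ ε : ℝ, 0 < ε → ∃ N₀ : ℕ, 1 ≤ N₀ ∧ ∀ N, N₀ ≤ N → ‖T ^ N‖ ≤ (c + ε)^N)
    (hlow : ∀ k : ℕ, ∃ N : ℕ, k + 1 ≤ N ∧ (c:ℝ)^N ≤ ‖T ^ N‖) :
    spectralRadius ℂ T = ENNReal.ofReal c := by
  have hc0 : (0:ℝ) < c := lt_of_lt_of_le one_pos hc
  apply le_antisymm
  · apply ENNReal.le_of_forall_pos_le_add
    intro ε hε _
    obtain ⟨N₀, hN₁, hN⟩ := hup ε (by exact_mod_cast hε)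
    have hN0ne : ((N₀:ℝ)) ≠ 0 := by
      have : (0:ℕ) < N₀ := by omega
      exact_mod_cast this.ne'
    have key : spectralRadius ℂ T ≤ ENNReal.ofReal (c + ε) := by
      have h1 := spectrum.spectralRadius_le_pow_nnnorm_pow_one_div ℂ T (N₀ - 1)
      have hc1 : ((N₀ - 1 : ℕ) : ℝ) + 1 = (N₀ : ℝ) := by
        have h9 : (1:ℕ) ≤ N₀ := hN₁
        rw [Nat.cast_sub h9]
        push_cast
        ring
      rw [show N₀ - 1 + 1 = N₀ by omega, hc1, nnnorm_one, ENNReal.coe_one, ENNReal.one_rpow,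
        mul_one] at h1
      refine le_trans h1 ?_
      have h2 : (‖T ^ N₀‖₊ : ℝ≥0∞) ≤ ENNReal.ofReal ((c + ε)^N₀) := by
        rw [← ENNReal.ofReal_coe_nnreal, coe_nnnorm]
        exact ENNReal.ofReal_le_ofReal (hN N₀ le_rfl)
      have h3 : (ENNReal.ofReal ((c+ε)^N₀)) ^ ((1:ℝ)/N₀) = ENNReal.ofReal (c+ε) := by
        rw [ENNReal.ofReal_pow (by positivity), ← ENNReal.rpow_natCast, ← ENNReal.rpow_mul,
          mul_one_div, div_self hN0ne, ENNReal.rpow_one]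
      calc (‖T^N₀‖₊ : ℝ≥0∞) ^ ((1:ℝ)/N₀)
          ≤ (ENNReal.ofReal ((c+ε)^N₀)) ^ ((1:ℝ)/N₀) :=
            ENNReal.rpow_le_rpow h2 (by positivity)
        _ = ENNReal.ofReal (c+ε) := h3
    calc spectralRadius ℂ T ≤ ENNReal.ofReal (c + ε) := key
      _ = ENNReal.ofReal c + ENNReal.ofReal (ε:ℝ) :=
          ENNReal.ofReal_add (le_of_lt hc0) (by positivity)
      _ = ENNReal.ofReal c + (ε : ℝ≥0∞) := by rw [ENNReal.ofReal_coe_nnreal]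
  · choose Ns hNs1 hNs2 using hlow
    have htend : Filter.Tendsto Ns Filter.atTop Filter.atTop :=
      Filter.tendsto_atTop_mono (fun k => by show k ≤ Ns k; have := hNs1 k; omega) Filter.tendsto_id
    have hcomp := (spectrum.pow_nnnorm_pow_one_div_tendsto_nhds_spectralRadius T).comp htend
    refine ge_of_tendsto hcomp (Filter.Eventually.of_forall fun k => ?_)
    show ENNReal.ofReal c ≤ (‖T ^ Ns k‖₊ : ℝ≥0∞) ^ ((1:ℝ)/(Ns k))
    have hNkne : ((Ns k : ℝ)) ≠ 0 := by
      have : (0:ℕ) < Ns k := by have := hNs1 k; omega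
      exact_mod_cast this.ne'
    have h2 : ENNReal.ofReal ((c:ℝ)^(Ns k)) ≤ (‖T ^ Ns k‖₊ : ℝ≥0∞) := by
      rw [← ENNReal.ofReal_coe_nnreal, coe_nnnorm]
      exact ENNReal.ofReal_le_ofReal (hNs2 k)
    have h3 : ENNReal.ofReal c = (ENNReal.ofReal ((c:ℝ)^(Ns k)))^((1:ℝ)/(Ns k)) := by
      rw [ENNReal.ofReal_pow hc0.le, ← ENNReal.rpow_natCast, ← ENNReal.rpow_mul,
        mul_one_div, div_self hNkne, ENNReal.rpow_one]
    rw [h3]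
    exact ENNReal.rpow_le_rpow h2 (by positivity)

lemma spectralRadius_W : spectralRadius ℂ (Wop c hc) = ENNReal.ofReal c :=
  spectral_eq_of hc _ (fun ε hε => by
    obtain ⟨N₀, h1, h2⟩ := spectral_upper hc (-1) (Or.inr rfl) hε
    exact ⟨N₀, h1, h2⟩) (W_lower hc)

lemma spectralRadius_Winv : spectralRadius ℂ (Winv c hc) = ENNReal.ofReal c :=
  spectral_eq_of hc _ (fun ε hε => by
    obtain ⟨N₀, h1, h2⟩ := spectral_upper hc 1 (Or.inl rfl) hε
    exact ⟨N₀, h1, h2⟩) (Winv_lower hc)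

omit hc in
lemma exists_coord {x : Hsp} (hx : x ≠ 0) : ∃ n, x n ≠ 0 := by
  by_contra h
  push_neg at h
  exact hx (lp.ext (funext fun n => by rw [h n]; rfl))

lemma growth_chain {M r D : ℝ} {n : ℤ} {x : Hsp} (hxn : 0 < ‖x n‖) (hM : 0 < M)
    (hr : r = Real.log (M / ‖x n‖)) {N : ℕ} (hN : r + N * lam c < D) :
    M * c^N < Real.exp D * ‖x n‖ := by
  have hc0 : (0:ℝ) < c := lt_of_lt_of_le one_pos hc
  have he : Real.exp (r + N * lam c) < Real.exp D := Real.exp_lt_exp.2 hN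
  rw [Real.exp_add, hr, Real.exp_log (by positivity : (0:ℝ) < M / ‖x n‖),
    Real.exp_nat_mul, lam, Real.exp_log hc0] at he
  have heq : (M / ‖x n‖ * c^N) * ‖x n‖ = M * c^N := by
    field_simp [hxn.ne']
  calc M * c^N = (M / ‖x n‖ * c^N) * ‖x n‖ := heq.symm
    _ < Real.exp D * ‖x n‖ := mul_lt_mul_of_pos_right he hxn

lemma GG_unb (d : ℤ) (hd : d = 1 ∨ d = -1) {x : Hsp} (hx : x ≠ 0) {M : ℝ} (hM : 0 < M) :
    ∃ N : ℕ, M * c^N < ‖(GG c hc d ^ N) x‖ := by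
  obtain ⟨n, hn⟩ := exists_coord hx
  have hxn : 0 < ‖x n‖ := norm_pos_iff.2 hn
  rcases hd with h | h
  · subst h
    obtain ⟨N, hN⟩ := phi_bup hc n (Real.log (M / ‖x n‖))
    refine ⟨N, ?_⟩
    have hcoord := GG_pow_coord hc 1 N x (n - N)
    rw [show n - (N:ℤ) + (N:ℕ) * (1:ℤ) = n by push_cast; ring] at hcoord
    exact lt_of_lt_of_le (growth_chain hc hxn hM rfl hN) hcoord
  · subst h
    obtain ⟨N, hN⟩ := phi_fup hc n (Real.log (M / ‖x n‖))
    refine ⟨N, ?_⟩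
    have hcoord := GG_pow_coord hc (-1) N x (n + N)
    rw [show n + (N:ℤ) + (N:ℕ) * (-1:ℤ) = n by push_cast; ring] at hcoord
    exact lt_of_lt_of_le (growth_chain hc hxn hM rfl hN) hcoord

lemma HH_unb (d : ℤ) (hd : d = 1 ∨ d = -1) {x : Hsp} (hx : x ≠ 0) {M : ℝ} (hM : 0 < M) :
    ∃ N : ℕ, M * c^N < ‖(HH c hc d ^ N) x‖ := by
  obtain ⟨n, hn⟩ := exists_coord hx
  have hxn : 0 < ‖x n‖ := norm_pos_iff.2 hn
  rcases hd with h | h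
  · subst h
    obtain ⟨N, hN⟩ := phi_bdn hc n (Real.log (M / ‖x n‖))
    refine ⟨N, ?_⟩
    have hcoord := HH_pow_coord hc 1 N x (n - N)
    rw [show n - (N:ℤ) + (N:ℕ) * (1:ℤ) = n by push_cast; ring] at hcoord
    exact lt_of_lt_of_le (growth_chain hc hxn hM rfl hN) hcoord
  · subst h
    obtain ⟨N, hN⟩ := phi_fdn hc n (Real.log (M / ‖x n‖))
    refine ⟨N, ?_⟩
    have hcoord := HH_pow_coord hc (-1) N x (n + N)
    rw [show n + (N:ℤ) + (N:ℕ) * (-1:ℤ) = n by push_cast; ring] at hcoord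
    exact lt_of_lt_of_le (growth_chain hc hxn hM rfl hN) hcoord

omit hc in
lemma K_ne_zero {u : K} (hu : u ≠ 0) : u.fst ≠ 0 ∨ u.snd ≠ 0 := by
  by_contra h
  push_neg at h
  exact hu (WithLp.ofLp_injective 2 (Prod.ext h.1 h.2))

lemma pair_grow (A B : Hsp →L[ℂ] Hsp)
    (hA : ∀ x : Hsp, x ≠ 0 → ∀ M : ℝ, 0 < M → ∃ N : ℕ, M * c^N < ‖(A^N) x‖)
    (hB : ∀ x : Hsp, x ≠ 0 → ∀ M : ℝ, 0 < M → ∃ N : ℕ, M * c^N < ‖(B^N) x‖) :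
    ∀ u : K, u ≠ 0 → ∀ M : ℝ, 0 < M → ∃ N : ℕ, M * c^N < ‖(pairMap A B ^ N) u‖ := by
  intro u hu M hM
  rcases K_ne_zero hu with h | h
  · obtain ⟨N, hN⟩ := hA u.fst h M hM
    refine ⟨N, lt_of_lt_of_le hN ?_⟩
    rw [pairMap_pow]
    exact pairMap_norm_fst _ _ u
  · obtain ⟨N, hN⟩ := hB u.snd h M hM
    refine ⟨N, lt_of_lt_of_le hN ?_⟩
    rw [pairMap_pow]
    exact pairMap_norm_snd _ _ u

lemma S_eq_zero (T : K →L[ℂ] K)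
    (hgrow : ∀ u : K, u ≠ 0 → ∀ M : ℝ, 0 < M → ∃ N : ℕ, M * c^N < ‖(T ^ N) u‖) :
    S T c = {0} := by
  apply Set.eq_singleton_iff_unique_mem.mpr
  constructor
  · exact ⟨0, le_refl 0, fun N => by rw [map_zero, norm_zero, zero_mul]⟩
  · intro u hu
    obtain ⟨M, hM0, hM⟩ := hu
    by_contra hu0
    have h0 := hM 0
    rw [pow_zero, pow_zero, mul_one, ContinuousLinearMap.one_apply] at h0
    have hMpos : 0 < M := lt_of_lt_of_le (norm_pos_iff.2 hu0) h0
    obtain ⟨N, hN⟩ := hgrow u hu0 M hMpos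
    exact absurd (hM N) (not_le.2 hN)

lemma Wop_fst (p : K) : (Wop c hc p).fst = GG c hc (-1) p.fst := rfl
lemma Wop_snd (p : K) : (Wop c hc p).snd = HH c hc (-1) p.snd := rfl

lemma indef_W (p q : K) : indef (Wop c hc p) (Wop c hc q) = indef p q := by
  show (inner ℂ (Wop c hc p).fst (Wop c hc q).snd : ℂ)
      + (inner ℂ (Wop c hc p).snd (Wop c hc q).fst : ℂ)
    = (inner ℂ p.fst q.snd : ℂ) + (inner ℂ p.snd q.fst : ℂ)
  rw [Wop_fst, Wop_snd, Wop_fst, Wop_snd, inner_GG_HH hc, inner_HH_GG hc]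

lemma S_W : S (Wop c hc) c = {0} :=
  S_eq_zero hc _ (pair_grow hc _ _
    (fun x hx M hM => GG_unb hc (-1) (Or.inr rfl) hx hM)
    (fun x hx M hM => HH_unb hc (-1) (Or.inr rfl) hx hM))

lemma S_Winv : S (Winv c hc) c = {0} :=
  S_eq_zero hc _ (pair_grow hc _ _
    (fun x hx M hM => GG_unb hc 1 (Or.inl rfl) hx hM)
    (fun x hx M hM => HH_unb hc 1 (Or.inl rfl) hx hM))

lemma S_adjW : S (ContinuousLinearMap.adjoint (Wop c hc)) c = {0} := by
  rw [adjoint_W hc]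
  exact S_eq_zero hc _ (pair_grow hc _ _
    (fun x hx M hM => HH_unb hc 1 (Or.inl rfl) hx hM)
    (fun x hx M hM => GG_unb hc 1 (Or.inl rfl) hx hM))

lemma S_adjWinv : S (ContinuousLinearMap.adjoint (Winv c hc)) c = {0} := by
  rw [adjoint_Winv hc]
  exact S_eq_zero hc _ (pair_grow hc _ _
    (fun x hx M hM => HH_unb hc (-1) (Or.inr rfl) hx hM)
    (fun x hx M hM => GG_unb hc (-1) (Or.inr rfl) hx hM))

end PartD

end St18

/-- For every `c ≥ 1` there is a bounded invertible operator `W` with bounded inverse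
on the product Hilbert space `K = H × H` such that: (i) `W` preserves the indefinite
inner ℂ product (`W` is `J`-unitary); (ii) `r(W) = r(W⁻¹) = c`; and (iii)
`S(W,c) = S(W⁻¹,c) = S((W*)⁻¹,c) = S(W*,c) = {0}` (here `(W*)⁻¹ = (W⁻¹)*`). -/
theorem stmt18 (c : ℝ) (hc : 1 ≤ c) :
    ∃ W Winv : K →L[ℂ] K,
      W ∘L Winv = 1 ∧ Winv ∘L W = 1 ∧
      (∀ p q : K, indef (W p) (W q) = indef p q) ∧
      spectralRadius ℂ W = ENNReal.ofReal c ∧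
      spectralRadius ℂ Winv = ENNReal.ofReal c ∧
      S W c = {0} ∧ S Winv c = {0} ∧
      S (ContinuousLinearMap.adjoint Winv) c = {0} ∧
      S (ContinuousLinearMap.adjoint W) c = {0} := by
  exact ⟨St18.Wop c hc, St18.Winv c hc, St18.W_comp_Winv hc, St18.Winv_comp_W hc,
    St18.indef_W hc, St18.spectralRadius_W hc, St18.spectralRadius_Winv hc,
    St18.S_W hc, St18.S_Winv hc, St18.S_adjWinv hc, St18.S_adjW hc⟩
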